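/- Let B be an A-good basis of F^m, where A has kernel K. Then B ∩ K is a basis of K. -/

import Mathlib

/-- If `B` is an `A`-good basis of `F^m`, then `B ∩ K` is a basis of the kernel `K` of `A`. -/
theorem stmt_3 {F : Type*} [Field F] {n m : ℕ}
    (A : Matrix (Fin n) (Fin m) F) (B : Set (Fin m → F))
    (hBli : LinearIndependent F ((↑) : B → (Fin m → F)))
    (hBsp : Submodule.span F B = ⊤)
    (hgood : ∀ v ∈ B, A.mulVec v ≠ 0 →
      ∃ i, A.mulVec v i ≠ 0 ∧ ∀ w ∈ B, w ≠ v → A.mulVec w i = 0) :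
    LinearIndependent F ((↑) : (B ∩ {v | A.mulVec v = 0} : Set (Fin m → F)) → (Fin m → F)) ∧
      Submodule.span F (B ∩ {v | A.mulVec v = 0}) = LinearMap.ker A.mulVecLin := by
  constructor
  · exact LinearIndepOn.mono (v := id) hBli Set.inter_subset_left
  · apply le_antisymm
    · rw [Submodule.span_le]
      rintro v ⟨-, hv⟩
      exact hv
    · rintro v (hv : A.mulVec v = 0)
      have : v ∈ Submodule.span F B := by rw [hBsp]; trivial
      obtain ⟨f, hfsupp, hfsum⟩ := Submodule.mem_span_set.mp this
      have key : ∀ b ∈ f.support, A.mulVec b = 0 := by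
        intro b hb
        by_contra hAb
        have hbB : b ∈ B := hfsupp hb
        obtain ⟨i, hi, hzero⟩ := hgood b hbB hAb
        have hsum : A.mulVec v = ∑ w ∈ f.support, f w • A.mulVec w := by
          rw [← hfsum]
          simp only [← A.mulVecLin_apply, Finsupp.sum, map_sum, map_smul]
        have : (0 : F) = f b * A.mulVec b i := by
          have := congrFun hsum i
          rw [hv] at this
          simp only [Finset.sum_apply, Pi.smul_apply, smul_eq_mul, Pi.zero_apply] at this
          rw [this, Finset.sum_eq_single b]
          · intro w hw hwb
            rcases eq_or_ne (A.mulVec w) 0 with h | h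
            · simp [h]
            · rw [hzero w (hfsupp hw) hwb]; ring
          · intro h; exact absurd hb h
        have hfb : f b = 0 := by
          rcases mul_eq_zero.mp this.symm with h | h
          · exact h
          · exact absurd h hi
        exact Finsupp.mem_support_iff.mp hb hfb
      have : ↑f.support ⊆ B ∩ {v | A.mulVec v = 0} := by
        intro b hb
        exact ⟨hfsupp hb, key b hb⟩
      rw [← hfsum]
      exact Submodule.sum_smul_mem _ _ fun b hb =>
        Submodule.subset_span (this hb)
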